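/- (Oppenheim's inequality) Let $A$ and $B$ be real symmetric positive semidefinite $n \times n$ matrices. Then $\det(A \circ B) \geq \det(A) \prod_{i=1}^{n} B_{ii}$, where $A \circ B$ is the Hadamard product. -/

import Mathlib

open Matrix Finset

open scoped MatrixOrder in
lemma schur_product {n : Type*} [Fintype n] (A B : Matrix n n ℝ)
    (hA : A.PosSemidef) (hB : B.PosSemidef) : (Matrix.hadamard A B).PosSemidef := by
  obtain ⟨C, hC⟩ : ∃ C : Matrix n n ℝ, B = Cᴴ * C := by
    classical
    obtain ⟨C, hC⟩ := CStarAlgebra.nonneg_iff_eq_star_mul_self.mp hB.nonneg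
    exact ⟨C, hC⟩
  refine PosSemidef.of_dotProduct_mulVec_nonneg ?_ ?_
  · ext i j
    simp only [conjTranspose_apply, hadamard_apply, star_trivial]
    rw [← hA.1.apply i j, ← hB.1.apply i j]
    simp
  · intro x
    have h1 : star x ⬝ᵥ (Matrix.hadamard A B) *ᵥ x
        = ∑ i, ∑ j, ∑ k, x i * A i j * x j * (C k i * C k j) := by
      simp only [dotProduct, mulVec, hadamard_apply, hC, mul_apply, conjTranspose_apply,
        star_trivial, Finset.mul_sum, Finset.sum_mul]
      refine Finset.sum_congr rfl fun i _ => Finset.sum_congr rfl fun j _ =>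
        Finset.sum_congr rfl fun k _ => by ring
    have h2 : ∑ k, (fun i => C k i * x i) ⬝ᵥ A *ᵥ (fun i => C k i * x i)
        = ∑ i, ∑ j, ∑ k, x i * A i j * x j * (C k i * C k j) := by
      simp only [dotProduct, mulVec, Finset.mul_sum, Finset.sum_mul]
      rw [Finset.sum_comm]
      refine Finset.sum_congr rfl fun i _ => ?_
      rw [Finset.sum_comm]
      exact Finset.sum_congr rfl fun j _ => Finset.sum_congr rfl fun k _ => by ring
    rw [h1, ← h2]
    exact Finset.sum_nonneg fun k _ => by simpa using hA.dotProduct_mulVec_nonneg (fun i => C k i * x i)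

lemma psd_det_nonneg {n : Type*} [Fintype n] [DecidableEq n] {A : Matrix n n ℝ}
    (hA : A.PosSemidef) : 0 ≤ A.det := by
  rw [hA.isHermitian.det_eq_prod_eigenvalues]
  exact Finset.prod_nonneg fun i _ => by simpa using hA.eigenvalues_nonneg i

lemma one_le_det_one_add {n : Type*} [Fintype n] [DecidableEq n] {M : Matrix n n ℝ}
    (hM : M.PosSemidef) : 1 ≤ (1 + M).det := by
  have hN : (1 + M).PosSemidef := PosSemidef.add PosSemidef.one hM
  rw [hN.isHermitian.det_eq_prod_eigenvalues]
  have hp := Finset.prod_le_prod (s := Finset.univ) (f := fun _ : n => (1:ℝ))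
    (g := fun i => (hN.isHermitian.eigenvalues i : ℝ)) (fun _ _ => zero_le_one) ?_
  · simpa using hp
  intro i _
  set v : n → ℝ := ⇑(hN.isHermitian.eigenvectorBasis i) with hv
  have hnorm : ‖hN.isHermitian.eigenvectorBasis i‖ = 1 :=
    hN.isHermitian.eigenvectorBasis.orthonormal.1 i
  have hvv : v ⬝ᵥ v = 1 := by
    have : (inner ℝ (hN.isHermitian.eigenvectorBasis i) (hN.isHermitian.eigenvectorBasis i) : ℝ) = 1 := by
      rw [real_inner_self_eq_norm_sq, hnorm]; norm_num
    rw [PiLp.inner_apply] at this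
    simpa [dotProduct, RCLike.inner_apply, v, sq] using this
  have heig := hN.isHermitian.eigenvalues_eq i
  rw [heig]
  have : (1 + M) *ᵥ v = v + M *ᵥ v := by rw [add_mulVec, one_mulVec]
  rw [this]
  have hMv : 0 ≤ v ⬝ᵥ (M *ᵥ v) := by simpa using hM.dotProduct_mulVec_nonneg v
  simp only [star_trivial, dotProduct_add, hvv, RCLike.re_to_real]
  linarith

open scoped MatrixOrder in
lemma det_le_det_add {n : Type*} [Fintype n] [DecidableEq n] {A B : Matrix n n ℝ}
    (hA : A.PosSemidef) (hB : B.PosSemidef) : A.det ≤ (A + B).det := by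
  by_cases hd : A.det = 0
  · exact hd ▸ psd_det_nonneg (hA.add hB)
  · set S := CFC.sqrt A with hS
    have hSS : S * S = A := CFC.sqrt_mul_sqrt_self A hA.nonneg
    have hSdet : S.det * S.det = A.det := by rw [← det_mul, hSS]
    have hSd0 : S.det ≠ 0 := fun h => hd (by rw [← hSdet, h, mul_zero])
    have hSH : S.IsHermitian := (CFC.sqrt_nonneg A).posSemidef.isHermitian
    have hSinvH : (S⁻¹).IsHermitian := hSH.inv
    have hMpsd : ((S⁻¹)ᴴ * B * S⁻¹).PosSemidef := hB.conjTranspose_mul_mul_same S⁻¹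
    rw [hSinvH.eq] at hMpsd
    have hinv : S * S⁻¹ = 1 := mul_nonsing_inv S (isUnit_iff_ne_zero.mpr hSd0)
    have hinv' : S⁻¹ * S = 1 := nonsing_inv_mul S (isUnit_iff_ne_zero.mpr hSd0)
    have key : A + B = S * (1 + S⁻¹ * B * S⁻¹) * S := by
      have hmid : S * (S⁻¹ * B * S⁻¹) * S = B := by
        calc S * (S⁻¹ * B * S⁻¹) * S = (S * S⁻¹) * B * (S⁻¹ * S) := by
              simp only [Matrix.mul_assoc]
            _ = B := by rw [hinv, hinv', Matrix.one_mul, Matrix.mul_one]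
      rw [Matrix.mul_add, Matrix.add_mul, Matrix.mul_one, hSS, hmid]
    rw [key, det_mul, det_mul]
    have h1 : 1 ≤ (1 + S⁻¹ * B * S⁻¹).det := one_le_det_one_add hMpsd
    nlinarith [sq_nonneg S.det, hSdet]

lemma psd_diag_nonneg {n : Type*} [Fintype n] [DecidableEq n] {A : Matrix n n ℝ}
    (hA : A.PosSemidef) (i : n) : 0 ≤ A i i := by
  have := hA.dotProduct_mulVec_nonneg (Pi.single i 1)
  simpa [dotProduct, mulVec, Pi.single_apply] using this

lemma psd_row_zero {n : Type*} [Fintype n] [DecidableEq n] {A : Matrix n n ℝ}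
    (hA : A.PosSemidef) (i : n) (hii : A i i = 0) (j : n) : A i j = 0 := by
  by_cases hij : i = j
  · rwa [← hij]
  by_contra hne
  set t : ℝ := -(A j j + 1) / (2 * A i j) with ht
  have h2 : (0:ℝ) < 2 := by norm_num
  have := hA.dotProduct_mulVec_nonneg (Pi.single i t + Pi.single j 1)
  have hsym : A j i = A i j := by
    rw [← hA.1.apply j i]; simp
  have hval : star (Pi.single i t + Pi.single j 1) ⬝ᵥ A *ᵥ (Pi.single i t + Pi.single j 1)
      = t * t * A i i + t * (A i j + A j i) + A j j := by
    simp [dotProduct, mulVec, Pi.single_apply, Finset.sum_add_distrib, mul_add, add_mul,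
      Finset.sum_ite_eq, Finset.sum_ite_eq']
    ring
  rw [hval, hii, hsym] at this
  rw [ht] at this
  have h2a : (2 : ℝ) * A i j ≠ 0 := mul_ne_zero two_ne_zero hne
  field_simp at this
  have heq : ((-1 + -A j j) * (A i j + A i j) + A j j * (2 * A i j)) / (2 * A i j) = -1 := by
    field_simp
    ring
  have hp : 0 < A i j ^ 2 := lt_of_le_of_ne (sq_nonneg _) (Ne.symm (pow_ne_zero 2 hne))
  rw [le_div_iff₀ hp] at this
  linarith

lemma posDef_one_by_one (M : Matrix (Fin 1) (Fin 1) ℝ) (h : 0 < M 0 0) : M.PosDef := by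
  refine PosDef.of_dotProduct_mulVec_pos ?_ ?_
  · ext i j
    fin_cases i <;> fin_cases j <;> simp [conjTranspose_apply]
  · intro x hx
    have hx0 : x 0 ≠ 0 := by
      intro h0
      exact hx (funext fun i => by fin_cases i; exact h0)
    have : star x ⬝ᵥ M *ᵥ x = M 0 0 * (x 0)^2 := by
      simp [dotProduct, mulVec, Fin.sum_univ_one]
      ring
    rw [this]
    positivity

lemma inv_one_by_one (M : Matrix (Fin 1) (Fin 1) ℝ) : M⁻¹ 0 0 = (M 0 0)⁻¹ := by
  rw [Matrix.inv_def, Matrix.adjugate_fin_one, Matrix.det_fin_one]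
  simp [Ring.inverse_eq_inv']

-- placeholders for previously proven lemmas
lemma opp_step {m : ℕ}
    (ih : ∀ A B : Matrix (Fin m) (Fin m) ℝ, A.PosSemidef → B.PosSemidef →
      A.det * ∏ i, B i i ≤ (Matrix.hadamard A B).det)
    (A B : Matrix (Fin 1 ⊕ Fin m) (Fin 1 ⊕ Fin m) ℝ)
    (hA : A.PosSemidef) (hB : B.PosSemidef) :
    A.det * ∏ i, B i i ≤ (Matrix.hadamard A B).det := by
  by_cases hβ : B (Sum.inl 0) (Sum.inl 0) = 0
  · have hrow : ∀ j, (Matrix.hadamard A B) (Sum.inl 0) j = 0 := fun j => by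
      simp [Matrix.hadamard_apply, psd_row_zero hB (Sum.inl 0) hβ j]
    have hz : ∏ i, B i i = 0 :=
      Finset.prod_eq_zero (f := fun i => B i i) (Finset.mem_univ (Sum.inl 0)) hβ
    rw [det_eq_zero_of_row_eq_zero (Sum.inl 0) hrow, hz, mul_zero]
  by_cases hα : A (Sum.inl 0) (Sum.inl 0) = 0
  · have hrowA : ∀ j, A (Sum.inl 0) j = 0 := psd_row_zero hA (Sum.inl 0) hα
    have hrow : ∀ j, (Matrix.hadamard A B) (Sum.inl 0) j = 0 := fun j => by
      simp [Matrix.hadamard_apply, hrowA j]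
    rw [det_eq_zero_of_row_eq_zero (Sum.inl 0) hrow,
      det_eq_zero_of_row_eq_zero (Sum.inl 0) hrowA, zero_mul]
  have hα' : 0 < A (Sum.inl 0) (Sum.inl 0) := lt_of_le_of_ne (psd_diag_nonneg hA _) (Ne.symm hα)
  have hβ' : 0 < B (Sum.inl 0) (Sum.inl 0) := lt_of_le_of_ne (psd_diag_nonneg hB _) (Ne.symm hβ)
  set A₁ := A.toBlocks₁₁ with hA₁
  set A₂ := A.toBlocks₁₂ with hA₂
  set A₄ := A.toBlocks₂₂ with hA₄
  set B₁ := B.toBlocks₁₁ with hB₁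
  set B₂ := B.toBlocks₁₂ with hB₂
  set B₄ := B.toBlocks₂₂ with hB₄def
  have hAblock : A = fromBlocks A₁ A₂ A₂ᴴ A₄ := by
    have h21 : A.toBlocks₂₁ = A₂ᴴ := by
      ext i j
      simpa [toBlocks₂₁, toBlocks₁₂, conjTranspose_apply, hA₂] using
        (hA.1.apply (Sum.inr i) (Sum.inl j)).symm
    rw [← fromBlocks_toBlocks A, h21]
  have hBblock : B = fromBlocks B₁ B₂ B₂ᴴ B₄ := by
    have h21 : B.toBlocks₂₁ = B₂ᴴ := by
      ext i j
      simpa [toBlocks₂₁, toBlocks₁₂, conjTranspose_apply, hB₂] using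
        (hB.1.apply (Sum.inr i) (Sum.inl j)).symm
    rw [← fromBlocks_toBlocks B, h21]
  have hA₁pd : A₁.PosDef := posDef_one_by_one _ hα'
  have hB₁pd : B₁.PosDef := posDef_one_by_one _ hβ'
  haveI : Invertible A₁ := invertibleOfIsUnitDet _ (by
    rw [det_fin_one]; exact isUnit_iff_ne_zero.mpr hα)
  haveI : Invertible B₁ := invertibleOfIsUnitDet _ (by
    rw [det_fin_one]; exact isUnit_iff_ne_zero.mpr hβ)
  have hSA : (A₄ - A₂ᴴ * A₁⁻¹ * A₂).PosSemidef :=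
    (PosDef.fromBlocks₁₁ A₂ A₄ hA₁pd).mp (by rw [← hAblock]; exact hA)
  have hSB : (B₄ - B₂ᴴ * B₁⁻¹ * B₂).PosSemidef :=
    (PosDef.fromBlocks₁₁ B₂ B₄ hB₁pd).mp (by rw [← hBblock]; exact hB)
  set H₁ := Matrix.hadamard A₁ B₁ with hH₁
  set H₂ := Matrix.hadamard A₂ B₂ with hH₂
  set H₄ := Matrix.hadamard A₄ B₄ with hH₄
  have hHblock : Matrix.hadamard A B = fromBlocks H₁ H₂ H₂ᴴ H₄ := by
    ext i j
    cases i with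
    | inl i => cases j with
      | inl j => simp [Matrix.hadamard_apply, fromBlocks, hH₁, hA₁, hB₁, toBlocks₁₁]
      | inr j => simp [Matrix.hadamard_apply, fromBlocks, hH₂, hA₂, hB₂, toBlocks₁₂]
    | inr i => cases j with
      | inl j =>
        have ha := hA.1.apply (Sum.inr i) (Sum.inl j)
        have hb := hB.1.apply (Sum.inr i) (Sum.inl j)
        simp only [star_trivial] at ha hb
        simp [Matrix.hadamard_apply, fromBlocks, hH₂, hA₂, hB₂, toBlocks₁₂,
          conjTranspose_apply, ← ha, ← hb]
      | inr j => simp [Matrix.hadamard_apply, fromBlocks, hH₄, hA₄, hB₄def, toBlocks₂₂]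
  haveI : Invertible H₁ := invertibleOfIsUnitDet _ (by
    rw [det_fin_one]
    exact isUnit_iff_ne_zero.mpr (mul_ne_zero hα hβ))
  have hkey : H₄ - H₂ᴴ * H₁⁻¹ * H₂
      = Matrix.hadamard (A₄ - A₂ᴴ * A₁⁻¹ * A₂) B₄
        + Matrix.hadamard (A₂ᴴ * A₁⁻¹ * A₂) (B₄ - B₂ᴴ * B₁⁻¹ * B₂) := by
    ext i j
    simp only [Matrix.sub_apply, Matrix.add_apply, Matrix.hadamard_apply, mul_apply, Fin.sum_univ_one,
      conjTranspose_apply, star_trivial, inv_one_by_one, hH₁, hH₂, hH₄,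
      Matrix.hadamard_apply]
    have e1 : A₁ 0 0 = A (Sum.inl 0) (Sum.inl 0) := rfl
    have e2 : B₁ 0 0 = B (Sum.inl 0) (Sum.inl 0) := rfl
    rw [e1, e2]
    field_simp
    ring
  have hB₄ : B₄.PosSemidef := hB.submatrix Sum.inr
  have hT : (A₂ᴴ * A₁⁻¹ * A₂).PosSemidef :=
    (hA₁pd.posSemidef.inv).conjTranspose_mul_mul_same A₂
  have h1 : (Matrix.hadamard (A₄ - A₂ᴴ * A₁⁻¹ * A₂) B₄).PosSemidef :=
    schur_product _ _ hSA hB₄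
  have h2 : (Matrix.hadamard (A₂ᴴ * A₁⁻¹ * A₂) (B₄ - B₂ᴴ * B₁⁻¹ * B₂)).PosSemidef :=
    schur_product _ _ hT hSB
  have hdm : (Matrix.hadamard (A₄ - A₂ᴴ * A₁⁻¹ * A₂) B₄).det ≤ (H₄ - H₂ᴴ * H₁⁻¹ * H₂).det := by
    rw [hkey]; exact det_le_det_add h1 h2
  have hih := ih (A₄ - A₂ᴴ * A₁⁻¹ * A₂) B₄ hSA hB₄
  have hdetA : A.det = A (Sum.inl 0) (Sum.inl 0) * (A₄ - A₂ᴴ * A₁⁻¹ * A₂).det := by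
    conv_lhs => rw [hAblock]
    rw [det_fromBlocks₁₁, det_fin_one, invOf_eq_nonsing_inv]
    rfl
  have hdetH : (Matrix.hadamard A B).det
      = (A (Sum.inl 0) (Sum.inl 0) * B (Sum.inl 0) (Sum.inl 0)) * (H₄ - H₂ᴴ * H₁⁻¹ * H₂).det := by
    conv_lhs => rw [hHblock]
    rw [det_fromBlocks₁₁, det_fin_one, invOf_eq_nonsing_inv]
    have : H₁ 0 0 = A (Sum.inl 0) (Sum.inl 0) * B (Sum.inl 0) (Sum.inl 0) := rfl
    rw [this]
  have hprod : ∏ i, B i i = B (Sum.inl 0) (Sum.inl 0) * ∏ j, B₄ j j := by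
    rw [Fintype.prod_sum_type]
    congr 1
    · exact Fin.prod_univ_one _
  rw [hdetA, hdetH, hprod]
  have hz : 0 ≤ A (Sum.inl 0) (Sum.inl 0) * B (Sum.inl 0) (Sum.inl 0) :=
    le_of_lt (mul_pos hα' hβ')
  calc A (Sum.inl 0) (Sum.inl 0) * (A₄ - A₂ᴴ * A₁⁻¹ * A₂).det
        * (B (Sum.inl 0) (Sum.inl 0) * ∏ j, B₄ j j)
      = (A (Sum.inl 0) (Sum.inl 0) * B (Sum.inl 0) (Sum.inl 0))
        * ((A₄ - A₂ᴴ * A₁⁻¹ * A₂).det * ∏ j, B₄ j j) := by ring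
    _ ≤ (A (Sum.inl 0) (Sum.inl 0) * B (Sum.inl 0) (Sum.inl 0))
        * (Matrix.hadamard (A₄ - A₂ᴴ * A₁⁻¹ * A₂) B₄).det :=
      mul_le_mul_of_nonneg_left hih hz
    _ ≤ (A (Sum.inl 0) (Sum.inl 0) * B (Sum.inl 0) (Sum.inl 0))
        * (H₄ - H₂ᴴ * H₁⁻¹ * H₂).det :=
      mul_le_mul_of_nonneg_left hdm hz

lemma opp_fin : ∀ m : ℕ, ∀ A B : Matrix (Fin m) (Fin m) ℝ, A.PosSemidef → B.PosSemidef →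
    A.det * ∏ i, B i i ≤ (Matrix.hadamard A B).det := by
  intro m
  induction m with
  | zero =>
    intro A B _ _
    simp [Matrix.det_isEmpty]
  | succ m ih =>
    intro A B hA hB
    let e : Fin 1 ⊕ Fin m ≃ Fin (m + 1) := finSumFinEquiv.trans (finCongr (Nat.add_comm 1 m))
    have hAs : (A.submatrix e e).PosSemidef := hA.submatrix e
    have hBs : (B.submatrix e e).PosSemidef := hB.submatrix e
    have h := opp_step ih (A.submatrix e e) (B.submatrix e e) hAs hBs
    have hh : Matrix.hadamard (A.submatrix e e) (B.submatrix e e)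
        = (Matrix.hadamard A B).submatrix e e := rfl
    rw [hh, det_submatrix_equiv_self, det_submatrix_equiv_self] at h
    have hp : ∏ i : Fin 1 ⊕ Fin m, (B.submatrix e e) i i = ∏ i, B i i := by
      rw [← Equiv.prod_comp e (fun i => B i i)]; rfl
    rwa [hp] at h

/-- Oppenheim's inequality: `det(A ∘ B) ≥ det A * ∏ i, B i i` for real positive
semidefinite symmetric matrices `A` and `B`. -/
theorem oppenheim_inequality {n : Type*} [Fintype n] [DecidableEq n]
    (A B : Matrix n n ℝ) (hA : A.PosSemidef) (hB : B.PosSemidef) :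
    A.det * ∏ i, B i i ≤ (Matrix.hadamard A B).det := by
  let e : n ≃ Fin (Fintype.card n) := Fintype.equivFin n
  have h := opp_fin (Fintype.card n) (A.submatrix e.symm e.symm) (B.submatrix e.symm e.symm)
    (hA.submatrix e.symm) (hB.submatrix e.symm)
  have hh : Matrix.hadamard (A.submatrix e.symm e.symm) (B.submatrix e.symm e.symm)
      = (Matrix.hadamard A B).submatrix e.symm e.symm := rfl
  rw [hh, det_submatrix_equiv_self, det_submatrix_equiv_self] at h
  have hp : ∏ i : Fin (Fintype.card n), (B.submatrix e.symm e.symm) i i = ∏ i, B i i := by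
    rw [← Equiv.prod_comp e.symm (fun i => B i i)]; rfl
  rwa [hp] at h
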